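/- Let 0 < σ < n and let (K_n)_S be the complete graph K_n with self-loops at a set S of σ vertices. Then the spectrum of (K_n)_S consists of: (n−1+√((n−1)²+4σ))/2 with multiplicity 1, 0 with multiplicity σ−1, −1 with multiplicity n−σ−1, and (n−1−√((n−1)²+4σ))/2 with multiplicity 1. -/

import Mathlib

open Matrix Finset
open Polynomial

/-- Adjacency matrix of the complete graph `K_n`. -/
def adjKn (n : ℕ) : Matrix (Fin n) (Fin n) ℝ :=
  Matrix.of fun i j => if i = j then 0 else 1

/-- The diagonal 0-1 matrix indicating the loop vertices in `S`. -/
def loopMat (n : ℕ) (S : Finset (Fin n)) : Matrix (Fin n) (Fin n) ℝ :=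
  Matrix.of fun i j => if i = j ∧ i ∈ S then 1 else 0


lemma det_smul_one_sub_eq {n : ℕ} {A : Matrix (Fin n) (Fin n) ℝ} (hA : A.IsHermitian) (x : ℝ) :
    Matrix.det (x • (1 : Matrix (Fin n) (Fin n) ℝ) - A) = ∏ i, (x - hA.eigenvalues i) := by
  set U : Matrix (Fin n) (Fin n) ℝ := (hA.eigenvectorUnitary : Matrix (Fin n) (Fin n) ℝ) with hUdef
  have hU1 : U * star U = 1 := (Matrix.mem_unitaryGroup_iff).mp hA.eigenvectorUnitary.2
  have hU2 : star U * U = 1 := (Matrix.mem_unitaryGroup_iff').mp hA.eigenvectorUnitary.2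
  have hD : A = U * Matrix.diagonal hA.eigenvalues * star U := by
    have := hA.spectral_theorem
    simpa [U, Function.comp] using this
  have key : U * ((x • 1 - Matrix.diagonal hA.eigenvalues) * star U)
      = x • (1 : Matrix (Fin n) (Fin n) ℝ) - A := by
    rw [Matrix.sub_mul, Matrix.mul_sub, Matrix.smul_mul, Matrix.one_mul, Matrix.mul_smul,
      hU1, ← mul_assoc, ← hD]
  rw [← key, Matrix.det_mul, Matrix.det_mul, mul_comm (Matrix.det U), mul_assoc,
    ← Matrix.det_mul, hU2, Matrix.det_one, mul_one,
    Matrix.smul_one_eq_diagonal, Matrix.diagonal_sub, Matrix.det_diagonal]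

lemma det_compute (n : ℕ) (S : Finset (Fin n)) (h0 : 0 < S.card) (h1 : S.card < n)
    (x : ℝ) (hx0 : x ≠ 0) (hx1 : x + 1 ≠ 0) :
    Matrix.det (x • (1 : Matrix (Fin n) (Fin n) ℝ) - (adjKn n + loopMat n S)) =
      x ^ (S.card - 1) * (x + 1) ^ (n - S.card - 1)
        * (x ^ 2 - ((n : ℝ) - 1) * x - S.card) := by
  set d : Fin n → ℝ := fun i => if i ∈ S then x else x + 1 with hd
  have hdne : ∀ i, d i ≠ 0 := fun i => by by_cases h : i ∈ S <;> simp [d, h, hx0, hx1]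
  have hM : x • (1 : Matrix (Fin n) (Fin n) ℝ) - (adjKn n + loopMat n S)
      = Matrix.diagonal d *
        (1 + Matrix.replicateCol Unit (fun i => -(d i)⁻¹) * Matrix.replicateRow Unit (fun _ => (1:ℝ))) := by
    rw [Matrix.mul_add, Matrix.mul_one]
    ext i j
    rcases eq_or_ne i j with rfl | hij
    · by_cases hiS : i ∈ S
      · simp [adjKn, loopMat, Matrix.mul_apply, Matrix.replicateCol, Matrix.replicateRow, Matrix.one_apply,
          Matrix.diagonal_apply, hiS, d]
        field_simp
        ring
      · simp [adjKn, loopMat, Matrix.mul_apply, Matrix.replicateCol, Matrix.replicateRow, Matrix.one_apply,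
          Matrix.diagonal_apply, hiS, d]
        field_simp
        ring
    · simp [adjKn, loopMat, hij, Matrix.mul_apply, Matrix.replicateCol, Matrix.replicateRow, Matrix.one_apply,
        Matrix.diagonal_apply]
      exact (mul_inv_cancel₀ (hdne i)).symm
  have hcardc : (univ \ S).card = n - S.card := by
    rw [Finset.card_sdiff_of_subset (Finset.subset_univ S), Finset.card_univ, Fintype.card_fin]
  have hprod : ∏ i, d i = x ^ S.card * (x + 1) ^ (n - S.card) := by
    rw [← Finset.prod_sdiff (Finset.subset_univ S),
      Finset.prod_eq_pow_card (fun i hi => by simp [d, (Finset.mem_sdiff.mp hi).2] :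
        ∀ i ∈ univ \ S, d i = x + 1),
      Finset.prod_eq_pow_card (fun i hi => by simp [d, hi] : ∀ i ∈ S, d i = x),
      hcardc, mul_comm]
  have hsum : ∑ i, (d i)⁻¹ = S.card * x⁻¹ + (n - S.card : ℕ) * (x + 1)⁻¹ := by
    rw [← Finset.sum_sdiff (Finset.subset_univ S),
      Finset.sum_eq_card_nsmul (fun i hi => by simp [d, (Finset.mem_sdiff.mp hi).2] :
        ∀ i ∈ univ \ S, (d i)⁻¹ = (x + 1)⁻¹),
      Finset.sum_eq_card_nsmul (fun i hi => by simp [d, hi] : ∀ i ∈ S, (d i)⁻¹ = x⁻¹),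
      hcardc, nsmul_eq_mul, nsmul_eq_mul, add_comm]
  rw [hM, Matrix.det_mul, Matrix.det_diagonal, Matrix.det_one_add_replicateCol_mul_replicateRow]
  have hdot : (fun _ : Fin n => (1:ℝ)) ⬝ᵥ (fun i => -(d i)⁻¹) = -∑ i, (d i)⁻¹ := by
    simp [dotProduct]
  rw [hdot, hprod, hsum]
  have hb : ((n - S.card : ℕ) : ℝ) = (n : ℝ) - S.card := by
    rw [Nat.cast_sub h1.le]
  have hxs : x ^ S.card = x ^ (S.card - 1) * x := by
    conv_lhs => rw [← Nat.sub_add_cancel h0]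
    rw [pow_succ]
  have hns : 0 < n - S.card := Nat.sub_pos_of_lt h1
  have hxs' : (x + 1) ^ (n - S.card) = (x + 1) ^ (n - S.card - 1) * (x + 1) := by
    conv_lhs => rw [← Nat.sub_add_cancel hns]
    rw [pow_succ]
  rw [hxs, hxs', hb]
  field_simp
  ring

/-- spectrum of `(K_n)_S` for `0 < σ < n`. -/
theorem spec_Kn_some_loops (n : ℕ) (S : Finset (Fin n))
    (h0 : 0 < S.card) (h1 : S.card < n)
    (hA : (adjKn n + loopMat n S).IsHermitian) :
    Finset.univ.val.map hA.eigenvalues =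
      Multiset.replicate 1 (((n : ℝ) - 1 + Real.sqrt (((n : ℝ) - 1) ^ 2 + 4 * S.card)) / 2) +
      Multiset.replicate (S.card - 1) (0 : ℝ) +
      Multiset.replicate (n - S.card - 1) (-1 : ℝ) +
      Multiset.replicate 1 (((n : ℝ) - 1 - Real.sqrt (((n : ℝ) - 1) ^ 2 + 4 * S.card)) / 2) := by
  set s : ℝ := Real.sqrt (((n : ℝ) - 1) ^ 2 + 4 * S.card) with hs
  set lp : ℝ := ((n : ℝ) - 1 + s) / 2 with hlp
  set lm : ℝ := ((n : ℝ) - 1 - s) / 2 with hlm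
  have hs2 : s ^ 2 = ((n : ℝ) - 1) ^ 2 + 4 * S.card := Real.sq_sqrt (by positivity)
  have hquad : ∀ x : ℝ, (x - lp) * (x - lm) = x ^ 2 - ((n : ℝ) - 1) * x - S.card := by
    intro x
    rw [hlp, hlm]
    linear_combination (-(1 : ℝ)/4) * hs2
  set T : Multiset ℝ := Multiset.replicate 1 lp + Multiset.replicate (S.card - 1) (0 : ℝ) +
      Multiset.replicate (n - S.card - 1) (-1 : ℝ) + Multiset.replicate 1 lm with hT
  set L : Multiset ℝ := Finset.univ.val.map hA.eigenvalues with hL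
  suffices h : (L.map fun a => X - C a).prod = (T.map fun a => X - C a).prod by
    have h2 := congrArg Polynomial.roots h
    rwa [Polynomial.roots_multiset_prod_X_sub_C, Polynomial.roots_multiset_prod_X_sub_C] at h2
  apply Polynomial.eq_of_infinite_eval_eq
  have hsub : ({0, -1} : Set ℝ)ᶜ ⊆
      {x | eval x (L.map fun a => X - C a).prod = eval x (T.map fun a => X - C a).prod} := by
    intro x hx
    simp only [Set.mem_compl_iff, Set.mem_insert_iff, Set.mem_singleton_iff, not_or] at hx
    obtain ⟨hx0, hx1⟩ := hx
    have hx1' : x + 1 ≠ 0 := fun h' => hx1 (by linarith)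
    have hL1 : eval x (L.map fun a => X - C a).prod = ∏ i, (x - hA.eigenvalues i) := by
      rw [Polynomial.eval_multiset_prod, Multiset.map_map, hL, Multiset.map_map,
        Finset.prod_eq_multiset_prod]
      simp [Function.comp]
    have hT1 : eval x (T.map fun a => X - C a).prod =
        (x - lp) * x ^ (S.card - 1) * (x + 1) ^ (n - S.card - 1) * (x - lm) := by
      rw [Polynomial.eval_multiset_prod, Multiset.map_map, hT]
      simp only [Multiset.map_add, Multiset.map_replicate, Multiset.prod_add,
        Multiset.prod_replicate, Function.comp_apply, eval_sub, eval_X, eval_C]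
      ring
    rw [Set.mem_setOf_eq, hL1, hT1, ← det_smul_one_sub_eq hA x,
      det_compute n S h0 h1 x hx0 hx1']
    rw [← hquad x]
    ring
  refine Set.Infinite.mono hsub (Set.Finite.infinite_compl ?_)
  exact (Set.finite_singleton (-1 : ℝ)).insert 0
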